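/- The cross-conformal prediction set is contained in the CV+ interval: for any y ∈ ℝ, any τ ∈ [0,1], if τ + Σ_{i=1}^n 1[|y - μ_{k(i)}| < R_i] + τ·Σ_{i=1}^n 1[|y - μ_{k(i)}| = R_i] > α(n+1), then q⁻_{n,α}{μ_{k(i)} - R_i} ≤ y ≤ q⁺_{n,α}{μ_{k(i)} + R_i}. -/

import Mathlib

/-- The `k`-th smallest of `v 0, ..., v (n-1)` (1-indexed). -/
noncomputable def kth {n : ℕ} (v : Fin n → ℝ) (k : ℕ) : ℝ :=
  (((List.ofFn v) : Multiset ℝ).sort (· ≤ ·)).getD (k - 1) 0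

/-- Upper quantile with the convention `q⁺ = +∞` if `⌈(1-α)(n+1)⌉ > n`. -/
noncomputable def qplusE {n : ℕ} (α : ℝ) (v : Fin n → ℝ) : EReal :=
  if ⌈(1 - α) * (n + 1)⌉₊ ≤ n then ((kth v ⌈(1 - α) * (n + 1)⌉₊ : ℝ) : EReal) else ⊤

/-- Lower quantile with the convention `q⁻ = -∞` if `⌊α(n+1)⌋ < 1`. -/
noncomputable def qminusE {n : ℕ} (α : ℝ) (v : Fin n → ℝ) : EReal :=
  if 1 ≤ ⌊α * (n + 1)⌋₊ then ((kth v ⌊α * (n + 1)⌋₊ : ℝ) : EReal) else ⊥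

section helpers
variable {n : ℕ} (v : Fin n → ℝ) (y : ℝ)

lemma countP_sort_eq (p : ℝ → Prop) [DecidablePred p] :
    (((List.ofFn v) : Multiset ℝ).sort (· ≤ ·)).countP (fun x => decide (p x))
      = (Finset.univ.filter fun i => p (v i)).card := by
  have h1 : (((List.ofFn v) : Multiset ℝ).sort (· ≤ ·)).Perm (List.ofFn v) :=
    Multiset.coe_eq_coe.mp (Multiset.sort_eq _ _)
  rw [h1.countP_eq, List.ofFn_eq_map, List.countP_map]
  simp [Finset.card_filter, List.countP_eq_length_filter, Finset.filter,
    List.finRange, Function.comp]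
  rfl

lemma length_sort_eq :
    (((List.ofFn v) : Multiset ℝ).sort (· ≤ ·)).length = n := by
  have h1 : (((List.ofFn v) : Multiset ℝ).sort (· ≤ ·)).Perm (List.ofFn v) :=
    Multiset.coe_eq_coe.mp (Multiset.sort_eq _ _)
  rw [h1.length_eq, List.length_ofFn]

lemma kth_le (k : ℕ) (hk1 : 1 ≤ k) (hkn : k ≤ n)
    (h : k ≤ (Finset.univ.filter fun i => v i ≤ y).card) : kth v k ≤ y := by
  set l := (((List.ofFn v) : Multiset ℝ).sort (· ≤ ·)) with hl
  have hlen : l.length = n := length_sort_eq v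
  have hsort : l.Pairwise (· ≤ ·) := Multiset.pairwise_sort _ _
  have hcount : k ≤ l.countP (fun x => decide (x ≤ y)) := by
    rw [countP_sort_eq v (fun x => x ≤ y)]; exact h
  by_contra hcon
  push_neg at hcon
  have hidx : k - 1 < l.length := by omega
  have hget : kth v k = l[k-1] := by
    rw [show kth v k = l.getD (k-1) 0 from rfl, List.getD_eq_getElem?_getD,
      List.getElem?_eq_getElem hidx, Option.getD_some]
  rw [hget] at hcon
  -- all elements of drop (k-1) are > y
  have hdrop : ∀ x ∈ l.drop (k-1), ¬ (x ≤ y) := by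
    intro x hx
    obtain ⟨j, hj, rfl⟩ := List.getElem_of_mem hx
    rw [List.getElem_drop]
    have hij : (k-1) + j < l.length := by
      rw [List.length_drop] at hj; omega
    have : l[k-1] ≤ l[(k-1)+j] :=
      hsort.rel_get_of_le (a := ⟨k-1, hidx⟩) (b := ⟨(k-1)+j, hij⟩) (by simp)
    push_neg; linarith
  have hsplit : l.countP (fun x => decide (x ≤ y)) =
      (l.take (k-1)).countP (fun x => decide (x ≤ y))
      + (l.drop (k-1)).countP (fun x => decide (x ≤ y)) := by
    rw [← List.countP_append, List.take_append_drop]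
  have h0 : (l.drop (k-1)).countP (fun x => decide (x ≤ y)) = 0 := by
    rw [List.countP_eq_zero]
    intro x hx; simpa using hdrop x hx
  have h1 : (l.take (k-1)).countP (fun x => decide (x ≤ y)) ≤ k - 1 := by
    calc _ ≤ (l.take (k-1)).length := List.countP_le_length
    _ ≤ k - 1 := by rw [List.length_take]; omega
  omega

lemma le_kth (k : ℕ) (hk1 : 1 ≤ k) (hkn : k ≤ n)
    (h : (Finset.univ.filter fun i => v i < y).card < k) : y ≤ kth v k := by
  set l := (((List.ofFn v) : Multiset ℝ).sort (· ≤ ·)) with hl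
  have hlen : l.length = n := length_sort_eq v
  have hsort : l.Pairwise (· ≤ ·) := Multiset.pairwise_sort _ _
  have hcount : l.countP (fun x => decide (x < y)) < k := by
    rw [countP_sort_eq v (fun x => x < y)]; exact h
  by_contra hcon
  push_neg at hcon
  have hidx : k - 1 < l.length := by omega
  have hget : kth v k = l[k-1] := by
    rw [show kth v k = l.getD (k-1) 0 from rfl, List.getD_eq_getElem?_getD,
      List.getElem?_eq_getElem hidx, Option.getD_some]
  rw [hget] at hcon
  have htake : ∀ x ∈ l.take k, x < y := by
    intro x hx
    obtain ⟨j, hj, rfl⟩ := List.getElem_of_mem hx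
    rw [List.getElem_take]
    have hjk : j < k := by rw [List.length_take] at hj; omega
    have hjl : j < l.length := by rw [List.length_take] at hj; omega
    have : l[j] ≤ l[k-1] :=
      hsort.rel_get_of_le (a := ⟨j, hjl⟩) (b := ⟨k-1, hidx⟩) (by simp; omega)
    linarith
  have hsplit : l.countP (fun x => decide (x < y)) =
      (l.take k).countP (fun x => decide (x < y))
      + (l.drop k).countP (fun x => decide (x < y)) := by
    rw [← List.countP_append, List.take_append_drop]
  have h1 : (l.take k).countP (fun x => decide (x < y)) = (l.take k).length := by
    rw [List.countP_eq_length]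
    intro x hx; simpa using htake x hx
  have h2 : (l.take k).length = k := by rw [List.length_take]; omega
  omega

end helpers

/-- the cross-conformal prediction set is contained in the
CV+ interval.  Here `μ i` is the prediction `μ̂_{-S_{k(i)}}(X_{n+1})` from
the model with the fold of point `i` removed, and `R i` the CV residuals. -/
theorem cross_conformal_subset_CVplus (n : ℕ) (α : ℝ) (hα0 : 0 ≤ α) (hα1 : α ≤ 1)
    (μ : Fin n → ℝ) (R : Fin n → ℝ) (hR : ∀ i, 0 ≤ R i)
    (y : ℝ) (τ : ℝ) (hτ0 : 0 ≤ τ) (hτ1 : τ ≤ 1)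
    (hmem : α * (n + 1) <
      τ + ((Finset.univ.filter fun i => |y - μ i| < R i).card : ℝ)
        + τ * ((Finset.univ.filter fun i => |y - μ i| = R i).card : ℝ)) :
    qminusE α (fun i => μ i - R i) ≤ (y : EReal) ∧
      (y : EReal) ≤ qplusE α (fun i => μ i + R i) := by
  set A := (Finset.univ.filter fun i => |y - μ i| < R i) with hA
  set B := (Finset.univ.filter fun i => |y - μ i| = R i) with hB
  set S := (Finset.univ.filter fun i : Fin n => |y - μ i| ≤ R i) with hS
  have hSAB : S = A ∪ B := by
    ext i; simp [hS, hA, hB, le_iff_lt_or_eq]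
  have hdisjAB : Disjoint A B := by
    rw [Finset.disjoint_left]
    intro i h1 h2
    simp only [hA, hB, Finset.mem_filter, Finset.mem_univ, true_and] at h1 h2
    rw [h2] at h1; exact lt_irrefl _ h1
  have hScard : S.card = A.card + B.card := by
    rw [hSAB, Finset.card_union_of_disjoint hdisjAB]
  have hSn : S.card ≤ n := by
    have := Finset.card_filter_le (Finset.univ : Finset (Fin n))
      (fun i => |y - μ i| ≤ R i)
    simpa using this
  have hkey : α * (n + 1) < (S.card : ℝ) + 1 := by
    have hτB : τ * (B.card : ℝ) ≤ (B.card : ℝ) := by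
      nlinarith [Nat.cast_nonneg (α := ℝ) B.card]
    have : α * (n + 1) < 1 + (A.card : ℝ) + (B.card : ℝ) := by linarith
    rw [hScard]; push_cast; linarith
  have hα1' : α < 1 := by
    have hSn' : (S.card : ℝ) ≤ n := by exact_mod_cast hSn
    nlinarith
  constructor
  · -- lower bound
    rw [qminusE]
    split_ifs with hif
    · set ℓ := ⌊α * (n + 1)⌋₊ with hℓ
      rw [EReal.coe_le_coe_iff]
      have hfl : (ℓ : ℝ) ≤ α * (n + 1) :=
        Nat.floor_le (by positivity)
      have hℓS : ℓ ≤ S.card := by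
        have : (ℓ : ℝ) < (S.card : ℝ) + 1 := lt_of_le_of_lt hfl hkey
        exact_mod_cast Nat.lt_add_one_iff.mp (by exact_mod_cast this)
      have hℓn : ℓ ≤ n := le_trans hℓS hSn
      apply kth_le _ y ℓ hif hℓn
      refine le_trans hℓS (Finset.card_le_card ?_)
      intro i hi
      simp only [hS, Finset.mem_filter, Finset.mem_univ, true_and] at hi ⊢
      have := abs_le.mp hi
      linarith [this.2]
    · exact bot_le
  · -- upper bound
    rw [qplusE]
    split_ifs with hif
    · set k := ⌈(1 - α) * (n + 1)⌉₊ with hk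
      rw [EReal.coe_le_coe_iff]
      have hk1 : 1 ≤ k := by
        rw [hk]
        exact Nat.one_le_iff_ne_zero.mpr (Nat.pos_iff_ne_zero.mp
          (Nat.ceil_pos.mpr (by nlinarith)))
      apply le_kth _ y k hk1 hif
      set F := (Finset.univ.filter fun i : Fin n => μ i + R i < y) with hF
      have hdisjFS : Disjoint F S := by
        rw [Finset.disjoint_left]
        intro i h1 h2
        simp only [hF, hS, Finset.mem_filter, Finset.mem_univ, true_and] at h1 h2
        have := abs_le.mp h2
        linarith [this.1]
      have hcard : F.card + S.card ≤ n := by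
        rw [← Finset.card_union_of_disjoint hdisjFS]
        simpa using Finset.card_le_univ (F ∪ S)
      have hFr : (F.card : ℝ) < (1 - α) * (n + 1) := by
        have h1 : (F.card : ℝ) + (S.card : ℝ) ≤ n := by exact_mod_cast hcard
        nlinarith
      exact Nat.lt_ceil.mpr hFr
    · exact le_top
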